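/- Theorem 4.2(c). Let c > 0 and let {(P_1^{(j)},…,P_m^{(j)})}_{j≥0} be a sequence of tuples of orthonormal matrices satisfying the sufficient-ascent condition of the context. Then for every 1 ≤ ℓ ≤ m the following two series converge: (i) Σ_{j=0}^∞ σ_min(ℋ_ℓ^{(j)}) · ‖P_ℓ^{(j)} − Π_ℓ^{(j)} P_ℓ^{(j)}‖_F² < ∞, where Π_ℓ^{(j)} ∈ ℂ^{n_ℓ×n_ℓ} is the matrix of the orthogonal projection of ℂ^{n_ℓ} onto the column space of ℋ_ℓ^{(j)} (when rank(ℋ_ℓ^{(j)}) = k_ℓ this quantity equals ‖sin Θ(R(ℋ_ℓ^{(j)}), R(P_ℓ^{(j)}))‖_F², the squared Frobenius norm of the sines of the canonical angles between the column spaces); and (ii) Σ_{j=0}^∞ σ_min(ℋ_ℓ^{(j)}) · ‖ℋ_ℓ^{(j)} − P_ℓ^{(j)}·((P_ℓ^{(j)})^H ℋ_ℓ^{(j)})‖_F² / ‖ℋ_ℓ^{(j)}‖_F² < ∞, where a summand is taken to be 0 whenever ℋ_ℓ^{(j)} = 0. -/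

import Mathlib

open Matrix Filter Topology
open scoped ComplexOrder Classical
set_option maxHeartbeats 1000000

/-- The entries of the multi-mode product `B ×₁ P₁ᴴ ×₂ ⋯ ×ₘ Pₘᴴ` of an `m`-mode tensor
`B` of size `n 0 × ⋯ × n (m-1)` with the conjugate transposes of the matrices `P ℓ`.
The column index set of `P ℓ` is `(s : Fin t) × Fin (κ ℓ s)`, encoding the partition of
`k ℓ = Σ s, κ ℓ s` into `t` blocks (block `s` has the indices with first component `s`). -/
noncomputable def multiProd {m t : ℕ} {n : Fin m → ℕ} {κ : Fin m → Fin t → ℕ}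
    (B : (∀ ℓ, Fin (n ℓ)) → ℂ)
    (P : ∀ ℓ, Matrix (Fin (n ℓ)) ((s : Fin t) × Fin (κ ℓ s)) ℂ) :
    (∀ ℓ, (s : Fin t) × Fin (κ ℓ s)) → ℂ :=
  fun i => ∑ j : ∀ ℓ, Fin (n ℓ), (∏ ℓ, star (P ℓ (j ℓ) (i ℓ))) * B j

/-- The block-diagonal objective
`f(P₁,…,Pₘ) = ‖BDiag(B ×₁ P₁ᴴ ×₂ ⋯ ×ₘ Pₘᴴ)‖_F²`: the sum of `|T(i)|²` over all
multi-indices `i` whose components all lie in the same diagonal block. -/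
noncomputable def fObj {m t : ℕ} {n : Fin m → ℕ} {κ : Fin m → Fin t → ℕ}
    (B : (∀ ℓ, Fin (n ℓ)) → ℂ)
    (P : ∀ ℓ, Matrix (Fin (n ℓ)) ((s : Fin t) × Fin (κ ℓ s)) ℂ) : ℝ :=
  ∑ i : ∀ ℓ, (s : Fin t) × Fin (κ ℓ s),
    if ∃ s : Fin t, ∀ ℓ, (i ℓ).1 = s then Complex.normSq (multiProd B P i) else 0

/-- The tensor `B_{ℓ,s} = B ×₁ P_{1s}ᴴ ⋯ ×_{ℓ-1} P_{ℓ-1,s}ᴴ ×_{ℓ+1} P_{ℓ+1,s}ᴴ ⋯ ×ₘ P_{ms}ᴴ`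
(mode products by the `s`-th column blocks over every mode except `ℓ`), evaluated at the index
whose `ℓ`-th component is `a` and whose other components are given by `ih`. -/
noncomputable def Bls {m t : ℕ} {n : Fin m → ℕ} {κ : Fin m → Fin t → ℕ}
    (B : (∀ ℓ, Fin (n ℓ)) → ℂ)
    (P : ∀ ℓ, Matrix (Fin (n ℓ)) ((s : Fin t) × Fin (κ ℓ s)) ℂ)
    (ℓ : Fin m) (s : Fin t) (a : Fin (n ℓ))
    (ih : ∀ r : {r : Fin m // r ≠ ℓ}, Fin (κ r.1 s)) : ℂ :=
  ∑ j : ∀ r, Fin (n r),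
    if j ℓ = a then (∏ r : {r : Fin m // r ≠ ℓ}, star (P r.1 (j r.1) ⟨s, ih r⟩)) * B j else 0

/-- The matrix `H_{ℓs}(P₁,…,Pₘ) ∈ ℂ^{n_ℓ×n_ℓ}` with `(a,b)`-entry
`Σ_î B_{ℓ,s}(î[ℓ↦a])·conj(B_{ℓ,s}(î[ℓ↦b]))`, summed over multi-indices `î` with the
`ℓ`-th coordinate ignored. -/
noncomputable def Hmat {m t : ℕ} {n : Fin m → ℕ} {κ : Fin m → Fin t → ℕ}
    (B : (∀ ℓ, Fin (n ℓ)) → ℂ)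
    (P : ∀ ℓ, Matrix (Fin (n ℓ)) ((s : Fin t) × Fin (κ ℓ s)) ℂ)
    (ℓ : Fin m) (s : Fin t) : Matrix (Fin (n ℓ)) (Fin (n ℓ)) ℂ :=
  Matrix.of fun a b =>
    ∑ ih : ∀ r : {r : Fin m // r ≠ ℓ}, Fin (κ r.1 s),
      Bls B P ℓ s a ih * star (Bls B P ℓ s b ih)

/-- The partial Euclidean gradient `ℋ_ℓ(P₁,…,Pₘ) ∈ ℂ^{n_ℓ×k_ℓ}` of `fObj` with respect to
`P ℓ` (for the real inner ℂ product `⟨X,Y⟩ = Re tr(Yᴴ X)`): its `s`-th column block is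
`2 · H_{ℓs}(P₁,…,Pₘ) · P_{ℓs}`. -/
noncomputable def scrH {m t : ℕ} {n : Fin m → ℕ} {κ : Fin m → Fin t → ℕ}
    (B : (∀ ℓ, Fin (n ℓ)) → ℂ)
    (P : ∀ ℓ, Matrix (Fin (n ℓ)) ((s : Fin t) × Fin (κ ℓ s)) ℂ)
    (ℓ : Fin m) : Matrix (Fin (n ℓ)) ((s : Fin t) × Fin (κ ℓ s)) ℂ :=
  Matrix.of fun a sc => 2 * ∑ b, Hmat B P ℓ sc.1 a b * P ℓ b sc

/-- The trace norm (nuclear norm) of a complex matrix: the sum of all its singular values,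
computed as the sum of the square roots of the eigenvalues of `Hᴴ * H`. -/
noncomputable def traceNorm {α β : Type*} [Fintype α] [Fintype β] [DecidableEq β]
    (H : Matrix α β ℂ) : ℝ :=
  ∑ i, Real.sqrt ((Matrix.posSemidef_conjTranspose_mul_self H).1.eigenvalues i)

/-- The Frobenius norm of a complex matrix. -/
noncomputable def frobNorm {α β : Type*} [Fintype α] [Fintype β] (X : Matrix α β ℂ) : ℝ :=
  Real.sqrt (∑ a, ∑ b, Complex.normSq (X a b))

/-- The smallest singular value of a (tall, `card β ≤ card α`) complex matrix `H`:
the square root of the smallest eigenvalue of `Hᴴ * H`. -/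
noncomputable def sigmaMin {α β : Type*} [Fintype α] [Fintype β] [DecidableEq β]
    (H : Matrix α β ℂ) : ℝ :=
  sInf (Set.range fun i =>
    Real.sqrt ((Matrix.posSemidef_conjTranspose_mul_self H).1.eigenvalues i))

lemma arith_sq {q N : ℝ} (hq0 : 0 ≤ q) (h : q ≤ N) : 1 ^ 2 - N ^ 2 ≤ 1 - q ^ 2 := by
  nlinarith

lemma arith_i {sm s a re T : ℝ} (hsm0 : 0 ≤ sm) (hsm : sm ≤ s) (hs : 0 < s)
    (ha0 : 0 ≤ a) (ha : a ≤ s) (hre : re ≤ a) (hT : T ≤ 1 - (s⁻¹ * a) ^ 2) :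
    sm * T ≤ 2 * (s - re) := by
  have hinv : s⁻¹ * s = 1 := inv_mul_cancel₀ hs.ne'
  set r : ℝ := s⁻¹ * a with hrdef
  have hrs : r * s = a := by
    rw [hrdef, mul_comm s⁻¹ a, mul_assoc, hinv, mul_one]
  have hr0 : 0 ≤ r := mul_nonneg (inv_nonneg.2 hs.le) ha0
  have hr1 : r ≤ 1 := by
    rw [← hinv, hrdef]
    exact mul_le_mul_of_nonneg_left ha (inv_nonneg.2 hs.le)
  have h1r2 : 0 ≤ 1 - r ^ 2 := by nlinarith
  nlinarith [mul_le_mul_of_nonneg_left hT hsm0,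
    mul_nonneg (sub_nonneg.2 hsm) h1r2,
    mul_nonneg hs.le (sq_nonneg (1 - r))]

lemma arith_ii {sm s a re T F lam : ℝ} (hsm0 : 0 ≤ sm) (hsm : sm ≤ s) (hs0 : 0 ≤ s)
    (hss : s * s = lam) (ha0 : 0 ≤ a) (ha : a ≤ s) (hre : re ≤ a)
    (hlamF : lam ≤ F) (hT : T ≤ lam - a ^ 2) : sm * T ≤ 2 * (s - re) * F := by
  have hF0 : 0 ≤ F := le_trans (by nlinarith) hlamF
  nlinarith [mul_le_mul_of_nonneg_left hT hsm0,
    mul_nonneg (sub_nonneg.2 ha) (sub_nonneg.2 hlamF),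
    mul_nonneg (mul_nonneg (sub_nonneg.2 ha) (sub_nonneg.2 hsm)) (add_nonneg hs0 ha0),
    mul_nonneg hs0 (sq_nonneg (s - a)),
    mul_nonneg (sub_nonneg.2 hre) hF0]

section Core
variable {α β : Type*} [Fintype α] [Fintype β] [DecidableEq α] [DecidableEq β]

lemma trace_onb (M : Matrix β β ℂ) (b : OrthonormalBasis β ℂ (EuclideanSpace ℂ β)) :
    M.trace = ∑ i, (inner ℂ (b i) (Matrix.toEuclideanLin M (b i)) : ℂ) := by
  have h1 : M.trace = LinearMap.trace ℂ _ (Matrix.toEuclideanLin M) := by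
    rw [Matrix.toEuclideanLin_eq_toLin,
      LinearMap.trace_eq_matrix_trace ℂ (PiLp.basisFun 2 ℂ β) _,
      LinearMap.toMatrix_toLin]
  rw [h1, LinearMap.trace_eq_matrix_trace ℂ b.toBasis, Matrix.trace]
  congr 1; ext i
  rw [Matrix.diag_apply, LinearMap.toMatrix_apply, OrthonormalBasis.coe_toBasis_repr_apply,
    OrthonormalBasis.repr_apply_apply, OrthonormalBasis.coe_toBasis]

lemma toEuclideanLin_mul {γ : Type*} [Fintype γ] [DecidableEq γ] (A : Matrix α γ ℂ) (B : Matrix γ β ℂ)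
    (x : EuclideanSpace ℂ β) :
    Matrix.toEuclideanLin (A * B) x = Matrix.toEuclideanLin A (Matrix.toEuclideanLin B x) := by
  simp [Matrix.toEuclideanLin_apply, Matrix.mulVec_mulVec]


lemma inner_tl_left (A : Matrix α β ℂ) (x : EuclideanSpace ℂ β) (y : EuclideanSpace ℂ α) :
    (inner ℂ (Matrix.toEuclideanLin A x) y : ℂ) = inner ℂ x (Matrix.toEuclideanLin Aᴴ y) := by
  rw [Matrix.toEuclideanLin_conjTranspose_eq_adjoint, LinearMap.adjoint_inner_right]

lemma tl_one (x : EuclideanSpace ℂ β) : Matrix.toEuclideanLin (1 : Matrix β β ℂ) x = x := by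
  simp [Matrix.toEuclideanLin_apply, Matrix.one_mulVec]

lemma frob_sq (X : Matrix α β ℂ) (b : OrthonormalBasis β ℂ (EuclideanSpace ℂ β)) :
    frobNorm X ^ 2 = ∑ i, ‖Matrix.toEuclideanLin X (b i)‖ ^ 2 := by
  have h0 : frobNorm X ^ 2 = (Matrix.trace (Xᴴ * X)).re := by
    rw [frobNorm, Real.sq_sqrt (by exact Finset.sum_nonneg (fun _ _ =>
      Finset.sum_nonneg (fun _ _ => Complex.normSq_nonneg _)))]
    rw [Matrix.trace]
    simp only [Matrix.diag_apply, Matrix.mul_apply, Matrix.conjTranspose_apply]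
    rw [Complex.re_sum, Finset.sum_comm]
    refine Finset.sum_congr rfl fun a _ => ?_
    rw [Complex.re_sum]
    refine Finset.sum_congr rfl fun b _ => ?_
    rw [Complex.star_def, mul_comm, Complex.mul_conj, Complex.ofReal_re]
  rw [h0, trace_onb _ b, Complex.re_sum]
  refine Finset.sum_congr rfl fun i _ => ?_
  rw [toEuclideanLin_mul, ← inner_tl_left]
  simpa using (inner_self_eq_norm_sq (𝕜 := ℂ) (Matrix.toEuclideanLin X (b i)))

theorem core (H P : Matrix α β ℂ) (hP : Pᴴ * P = 1) :
    (0 ≤ traceNorm H - (Matrix.trace (Pᴴ * H)).re) ∧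
    (∀ Pr : Matrix α α ℂ, Pr * Pr = Pr → Prᴴ = Pr →
      LinearMap.range (Matrix.mulVecLin Pr) = Submodule.span ℂ (Set.range Hᵀ) →
      sigmaMin H * frobNorm (P - Pr * P) ^ 2
        ≤ 2 * (traceNorm H - (Matrix.trace (Pᴴ * H)).re)) ∧
    sigmaMin H * (frobNorm (H - P * (Pᴴ * H)) ^ 2 / frobNorm H ^ 2)
        ≤ 2 * (traceNorm H - (Matrix.trace (Pᴴ * H)).re) := by
  classical
  set hG := Matrix.posSemidef_conjTranspose_mul_self H with hGdef
  set v := hG.1.eigenvectorBasis with hvdef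
  set lam := hG.1.eigenvalues with hlamdef
  have hlam : ∀ i, 0 ≤ lam i := fun i => hG.eigenvalues_nonneg i
  set σ : β → ℝ := fun i => Real.sqrt (lam i) with hσdef
  have hσ0 : ∀ i, 0 ≤ σ i := fun i => Real.sqrt_nonneg _
  -- P preserves inner ℂ products
  have hPinner : ∀ x y : EuclideanSpace ℂ β,
      (inner ℂ (Matrix.toEuclideanLin P x) (Matrix.toEuclideanLin P y) : ℂ) = inner ℂ x y := by
    intro x y
    rw [inner_tl_left, ← toEuclideanLin_mul, hP, tl_one]
  have hPn : ∀ x : EuclideanSpace ℂ β, ‖Matrix.toEuclideanLin P x‖ = ‖x‖ := by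
    intro x
    rw [@norm_eq_sqrt_re_inner ℂ, @norm_eq_sqrt_re_inner ℂ _ _ _ _ x, hPinner]
  have hvn : ∀ i, ‖(v i : EuclideanSpace ℂ β)‖ = 1 := fun i => v.orthonormal.1 i
  have hHHv : ∀ i, Matrix.toEuclideanLin (Hᴴ * H) (v i) = (lam i : ℂ) • (v i) := by
    intro i
    have := hG.1.mulVec_eigenvectorBasis i
    apply (WithLp.equiv 2 _).injective
    simpa [Matrix.toEuclideanLin_apply] using congrArg id this
  have hnormHv : ∀ i, ‖Matrix.toEuclideanLin H (v i)‖ ^ 2 = lam i := by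
    intro i
    have h1 : (inner ℂ (Matrix.toEuclideanLin H (v i)) (Matrix.toEuclideanLin H (v i)) : ℂ)
        = (lam i : ℂ) := by
      rw [inner_tl_left, ← toEuclideanLin_mul]
      rw [hHHv, inner_smul_right]
      have : (inner ℂ (v i) (v i) : ℂ) = 1 := by
        rw [@inner_self_eq_norm_sq_to_K ℂ, hvn]; norm_num
      rw [this, mul_one]
    have := inner_self_eq_norm_sq (𝕜 := ℂ) (Matrix.toEuclideanLin H (v i))
    rw [h1] at this
    simpa using this.symm
  have hnormHv' : ∀ i, ‖Matrix.toEuclideanLin H (v i)‖ = σ i := by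
    intro i
    rw [hσdef]; dsimp only
    rw [← hnormHv i, Real.sqrt_sq (norm_nonneg _)]
  set c : β → ℂ := fun i =>
    inner ℂ (Matrix.toEuclideanLin P (v i)) (Matrix.toEuclideanLin H (v i)) with hcdef
  have hcabs : ∀ i, ‖c i‖ ≤ σ i := by
    intro i
    calc ‖c i‖ ≤ ‖Matrix.toEuclideanLin P (v i)‖ * ‖Matrix.toEuclideanLin H (v i)‖ :=
          norm_inner_le_norm _ _
      _ = σ i := by rw [hPn, hvn, hnormHv', one_mul]
  have htr : Matrix.trace (Pᴴ * H) = ∑ i, c i := by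
    rw [trace_onb _ v]
    refine Finset.sum_congr rfl fun i _ => ?_
    rw [toEuclideanLin_mul, ← inner_tl_left]
  have htrn : traceNorm H = ∑ i, σ i := rfl
  have hterm : ∀ i, 0 ≤ σ i - (c i).re := by
    intro i
    have h1 : (c i).re ≤ ‖c i‖ := Complex.re_le_norm _
    linarith [hcabs i]
  have hD : traceNorm H - (Matrix.trace (Pᴴ * H)).re = ∑ i, (σ i - (c i).re) := by
    rw [htrn, htr, Complex.re_sum, Finset.sum_sub_distrib]
  have hD0 : 0 ≤ traceNorm H - (Matrix.trace (Pᴴ * H)).re := by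
    rw [hD]; exact Finset.sum_nonneg fun i _ => hterm i
  have hsm0 : 0 ≤ sigmaMin H := by
    apply Real.sInf_nonneg
    rintro x ⟨i, rfl⟩; exact Real.sqrt_nonneg _
  have hsml : ∀ i, sigmaMin H ≤ σ i := by
    intro i
    exact csInf_le (Set.finite_range _).bddBelow ⟨i, rfl⟩
  refine ⟨hD0, ?_, ?_⟩
  · -- part (i)
    intro Pr hidem hherm hrange
    rcases eq_or_lt_of_le hsm0 with h0 | hpos
    · rw [← h0, zero_mul]; linarith
    have hlampos : ∀ i, 0 < σ i := fun i => lt_of_lt_of_le hpos (hsml i)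
    set u : β → EuclideanSpace ℂ α := fun i =>
      ((σ i)⁻¹ : ℂ) • Matrix.toEuclideanLin H (v i) with hudef
    have hun : ∀ i, ‖u i‖ = 1 := by
      intro i
      rw [hudef]; dsimp only
      rw [norm_smul, hnormHv']
      simp only [norm_inv, Complex.norm_real, Real.norm_eq_abs]
      rw [abs_of_nonneg (hσ0 i)]
      exact inv_mul_cancel₀ (ne_of_gt (hlampos i))
    -- u i is fixed by Pr
    have hufix : ∀ i, Matrix.toEuclideanLin Pr (u i) = u i := by
      intro i
      have hmem : (WithLp.equiv 2 (α → ℂ)) (u i) ∈ LinearMap.range (Matrix.mulVecLin H) := by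
        refine ⟨((σ i)⁻¹ : ℂ) • (WithLp.equiv 2 (β → ℂ)) (v i), ?_⟩
        rw [Matrix.mulVecLin_apply, Matrix.mulVec_smul]
        rw [hudef]
        rfl
      rw [Matrix.range_mulVecLin, show Set.range H.col = Set.range Hᵀ from rfl, ← hrange] at hmem
      obtain ⟨z, hz⟩ := hmem
      rw [Matrix.mulVecLin_apply] at hz
      have h2 : Pr *ᵥ (WithLp.equiv 2 (α → ℂ)) (u i) = (WithLp.equiv 2 (α → ℂ)) (u i) := by
        rw [← hz, Matrix.mulVec_mulVec, hidem]
      apply (WithLp.equiv 2 _).injective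
      simpa [Matrix.toEuclideanLin_apply] using h2
    have hPrinner : ∀ i (x : EuclideanSpace ℂ α),
        (inner ℂ (u i) (Matrix.toEuclideanLin Pr x) : ℂ) = inner ℂ (u i) x := by
      intro i x
      have : (inner ℂ (u i) (Matrix.toEuclideanLin Pr x) : ℂ)
          = inner ℂ (Matrix.toEuclideanLin Prᴴ (u i)) x := by
        rw [Matrix.toEuclideanLin_conjTranspose_eq_adjoint, LinearMap.adjoint_inner_left]
      rw [this, hherm, hufix]
    have hsad : ∀ (x y : EuclideanSpace ℂ α),
        (inner ℂ (Matrix.toEuclideanLin Pr x) y : ℂ) = inner ℂ x (Matrix.toEuclideanLin Pr y) := by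
      intro x y
      rw [inner_tl_left, hherm]
    have hidem' : ∀ y : EuclideanSpace ℂ α,
        Matrix.toEuclideanLin Pr (Matrix.toEuclideanLin Pr y) = Matrix.toEuclideanLin Pr y := by
      intro y
      rw [← toEuclideanLin_mul, hidem]
    have key : ∀ i, sigmaMin H * ‖Matrix.toEuclideanLin (P - Pr * P) (v i)‖ ^ 2
        ≤ 2 * (σ i - (c i).re) := by
      intro i
      set x := Matrix.toEuclideanLin P (v i) with hxdef
      have hx1 : ‖x‖ = 1 := by rw [hxdef, hPn, hvn]
      have hmap : Matrix.toEuclideanLin (P - Pr * P) (v i)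
          = x - Matrix.toEuclideanLin Pr x := by
        rw [map_sub, LinearMap.sub_apply, toEuclideanLin_mul]
      have hinner : (inner ℂ x (Matrix.toEuclideanLin Pr x) : ℂ)
          = inner ℂ (Matrix.toEuclideanLin Pr x) (Matrix.toEuclideanLin Pr x) := by
        rw [hsad, hidem']
      have hsub : ‖x - Matrix.toEuclideanLin Pr x‖ ^ 2
          = ‖x‖ ^ 2 - ‖Matrix.toEuclideanLin Pr x‖ ^ 2 := by
        rw [@norm_sub_sq ℂ, hinner]
        rw [inner_self_eq_norm_sq (𝕜 := ℂ)]
        ring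
      have hub : ‖(inner ℂ (u i) x : ℂ)‖ ≤ ‖Matrix.toEuclideanLin Pr x‖ := by
        calc ‖(inner ℂ (u i) x : ℂ)‖ = ‖(inner ℂ (u i) (Matrix.toEuclideanLin Pr x) : ℂ)‖ := by
              rw [hPrinner]
          _ ≤ ‖u i‖ * ‖Matrix.toEuclideanLin Pr x‖ := norm_inner_le_norm _ _
          _ = ‖Matrix.toEuclideanLin Pr x‖ := by rw [hun, one_mul]
      have hux : ‖(inner ℂ (u i) x : ℂ)‖ = (σ i)⁻¹ * ‖c i‖ := by
        rw [hudef]; dsimp only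
        rw [inner_smul_left]
        have h2 : (inner ℂ (Matrix.toEuclideanLin H (v i)) x : ℂ) = (starRingEnd ℂ) (c i) := by
          rw [← inner_conj_symm]
        rw [h2, norm_mul, RCLike.norm_conj, RCLike.norm_conj, norm_inv, Complex.norm_real,
          Real.norm_eq_abs, abs_of_nonneg (hσ0 i)]
      have hterm2 : ‖x - Matrix.toEuclideanLin Pr x‖ ^ 2 ≤ 1 - ((σ i)⁻¹ * ‖c i‖) ^ 2 := by
        rw [hsub, hx1]
        have h3 := hub
        rw [hux] at h3
        exact arith_sq (mul_nonneg (inv_nonneg.2 (hσ0 i)) (norm_nonneg (c i))) h3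
      rw [hmap]
      refine arith_i hsm0 (hsml i) (hlampos i) (norm_nonneg (c i)) (hcabs i) ?_ hterm2
      exact Complex.re_le_norm _
    rw [frob_sq _ v, Finset.mul_sum, hD, Finset.mul_sum]
    exact Finset.sum_le_sum fun i _ => key i
  · -- part (iii)
    have hF : frobNorm H ^ 2 = ∑ i, lam i := by
      rw [frob_sq _ v]
      exact Finset.sum_congr rfl fun i _ => hnormHv i
    have hF0 : 0 ≤ frobNorm H ^ 2 := sq_nonneg _
    have hQb : ∀ i, ‖Matrix.toEuclideanLin (H - P * (Pᴴ * H)) (v i)‖ ^ 2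
        ≤ lam i - ‖c i‖ ^ 2 := by
      intro i
      set xH := Matrix.toEuclideanLin H (v i) with hxHdef
      set w := Matrix.toEuclideanLin Pᴴ xH with hwdef
      have hmap : Matrix.toEuclideanLin (H - P * (Pᴴ * H)) (v i)
          = xH - Matrix.toEuclideanLin P w := by
        rw [map_sub, LinearMap.sub_apply, toEuclideanLin_mul, toEuclideanLin_mul]
      have h1 : (inner ℂ (Matrix.toEuclideanLin P w) xH : ℂ) = inner ℂ w w := by
        rw [inner_tl_left, hwdef]
      have h2 : (inner ℂ xH (Matrix.toEuclideanLin P w) : ℂ) = inner ℂ w w := by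
        rw [← inner_conj_symm, h1, inner_conj_symm]
      have h3 : ‖Matrix.toEuclideanLin P w‖ = ‖w‖ := hPn w
      have h4 : ‖xH - Matrix.toEuclideanLin P w‖ ^ 2 = lam i - ‖w‖ ^ 2 := by
        rw [@norm_sub_sq ℂ, h2, h3]
        have h5 : RCLike.re (inner ℂ w w : ℂ) = ‖w‖ ^ 2 := inner_self_eq_norm_sq (𝕜 := ℂ) w
        rw [h5, hxHdef, hnormHv]
        ring
      have h6 : ‖c i‖ ≤ ‖w‖ := by
        have h7 : c i = inner ℂ (v i) w := by
          rw [hcdef]; dsimp only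
          rw [inner_tl_left, hwdef, hxHdef]
        rw [h7]
        calc ‖(inner ℂ (v i) w : ℂ)‖ ≤ ‖v i‖ * ‖w‖ := norm_inner_le_norm _ _
          _ = ‖w‖ := by rw [hvn, one_mul]
      rw [hmap, h4]
      have := h6
      nlinarith [norm_nonneg w, norm_nonneg (c i), h6]
    rcases eq_or_lt_of_le hF0 with hFz | hFpos
    · rw [← hFz, div_zero, mul_zero]
      linarith
    · rw [← mul_div_assoc, div_le_iff₀ hFpos]
      have hlamF : ∀ i, lam i ≤ frobNorm H ^ 2 := by
        intro i
        rw [hF]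
        exact Finset.single_le_sum (fun j _ => hlam j) (Finset.mem_univ i)
      have perI : ∀ i, sigmaMin H * ‖Matrix.toEuclideanLin (H - P * (Pᴴ * H)) (v i)‖ ^ 2
          ≤ 2 * (σ i - (c i).re) * (frobNorm H ^ 2) := by
        intro i
        have hσsq : σ i * σ i = lam i := by
          rw [hσdef]; dsimp only
          exact Real.mul_self_sqrt (hlam i)
        refine arith_ii hsm0 (hsml i) (hσ0 i) hσsq (norm_nonneg (c i)) (hcabs i) ?_
          (hlamF i) (hQb i)
        exact Complex.re_le_norm _
      calc sigmaMin H * frobNorm (H - P * (Pᴴ * H)) ^ 2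
          = ∑ i, sigmaMin H * ‖Matrix.toEuclideanLin (H - P * (Pᴴ * H)) (v i)‖ ^ 2 := by
            rw [frob_sq _ v, Finset.mul_sum]
        _ ≤ ∑ i, 2 * (σ i - (c i).re) * (frobNorm H ^ 2) :=
            Finset.sum_le_sum fun i _ => perI i
        _ = 2 * (traceNorm H - (Matrix.trace (Pᴴ * H)).re) * frobNorm H ^ 2 := by
            rw [← Finset.sum_mul, hD, Finset.mul_sum]

lemma sigmaMin_nonneg {α β : Type*} [Fintype α] [Fintype β] [DecidableEq β]
    (H : Matrix α β ℂ) : 0 ≤ sigmaMin H := by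
  apply Real.sInf_nonneg
  rintro x ⟨i, rfl⟩
  exact Real.sqrt_nonneg _

lemma fObj_le {m t : ℕ} {n : Fin m → ℕ} {κ : Fin m → Fin t → ℕ}
    (B : (∀ ℓ, Fin (n ℓ)) → ℂ)
    (Q : ∀ ℓ, Matrix (Fin (n ℓ)) ((s : Fin t) × Fin (κ ℓ s)) ℂ)
    (hQ : ∀ ℓ, (Q ℓ)ᴴ * Q ℓ = 1) :
    fObj B Q ≤ (Fintype.card (∀ ℓ, (s : Fin t) × Fin (κ ℓ s)) : ℝ) *
      (∑ j : ∀ ℓ, Fin (n ℓ), ‖B j‖) ^ 2 := by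
  have hent : ∀ ℓ a sc, ‖Q ℓ a sc‖ ≤ 1 := by
    intro ℓ a sc
    have h1 := congrFun (congrFun (hQ ℓ) sc) sc
    rw [Matrix.mul_apply, Matrix.one_apply_eq] at h1
    have h2 : ∑ a', Complex.normSq (Q ℓ a' sc) = 1 := by
      have h3 := congrArg Complex.re h1
      rw [Complex.re_sum, Complex.one_re] at h3
      rw [← h3]
      refine Finset.sum_congr rfl fun a' _ => ?_
      rw [Matrix.conjTranspose_apply, Complex.star_def, mul_comm, Complex.mul_conj,
        Complex.ofReal_re]
    have h3 : Complex.normSq (Q ℓ a sc) ≤ 1 := by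
      rw [← h2]
      exact Finset.single_le_sum (f := fun a' => Complex.normSq (Q ℓ a' sc))
        (fun _ _ => Complex.normSq_nonneg _) (Finset.mem_univ a)
    rw [Complex.norm_def]
    calc Real.sqrt (Complex.normSq (Q ℓ a sc)) ≤ Real.sqrt 1 := Real.sqrt_le_sqrt h3
      _ = 1 := Real.sqrt_one
  have hmp : ∀ i, ‖multiProd B Q i‖ ≤ ∑ j, ‖B j‖ := by
    intro i
    calc ‖multiProd B Q i‖
        ≤ ∑ j : ∀ ℓ, Fin (n ℓ), ‖(∏ ℓ, star (Q ℓ (j ℓ) (i ℓ))) * B j‖ :=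
          norm_sum_le _ _
      _ ≤ ∑ j, ‖B j‖ := by
          refine Finset.sum_le_sum fun j _ => ?_
          rw [norm_mul]
          have hp : ‖∏ ℓ, star (Q ℓ (j ℓ) (i ℓ))‖ ≤ 1 := by
            rw [norm_prod]
            refine Finset.prod_le_one (fun ℓ' _ => norm_nonneg _) fun ℓ' _ => ?_
            rw [Complex.star_def, Complex.norm_conj]
            exact hent ℓ' (j ℓ') (i ℓ')
          exact mul_le_of_le_one_left (norm_nonneg _) hp
  calc fObj B Q ≤ ∑ i : ∀ ℓ, (s : Fin t) × Fin (κ ℓ s), Complex.normSq (multiProd B Q i) := by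
        rw [fObj]
        refine Finset.sum_le_sum fun i _ => ?_
        split_ifs
        · exact le_refl _
        · exact Complex.normSq_nonneg _
    _ ≤ ∑ _i : ∀ ℓ, (s : Fin t) × Fin (κ ℓ s), (∑ j, ‖B j‖) ^ 2 := by
        refine Finset.sum_le_sum fun i _ => ?_
        rw [← Complex.sq_norm]
        exact pow_le_pow_left₀ (norm_nonneg _) (hmp i) 2
    _ = _ := by
        rw [Finset.sum_const, Finset.card_univ, nsmul_eq_mul]

/-- Theorem 4.2(c): under the sufficient-ascent condition, for every mode `ℓ`
the series `Σ_j σ_min(ℋ_ℓ^{(j)})·‖P_ℓ^{(j)} − Π_ℓ^{(j)} P_ℓ^{(j)}‖_F²` (where `Π_ℓ^{(j)}` is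
the orthogonal projection onto the column space of `ℋ_ℓ^{(j)}`, characterized by being an
idempotent Hermitian matrix whose range is the span of the columns of `ℋ_ℓ^{(j)}`) and
`Σ_j σ_min(ℋ_ℓ^{(j)})·‖ℋ_ℓ^{(j)} − P_ℓ^{(j)}((P_ℓ^{(j)})ᴴ ℋ_ℓ^{(j)})‖_F²/‖ℋ_ℓ^{(j)}‖_F²`
both converge. -/
theorem stmt_19 (m t : ℕ) (hm : 1 ≤ m) (ht : 1 ≤ t)
    (n : Fin m → ℕ) (hn : ∀ ℓ, 1 ≤ n ℓ)
    (κ : Fin m → Fin t → ℕ) (hκ : ∀ ℓ s, 1 ≤ κ ℓ s)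
    (hkn : ∀ ℓ, (∑ s, κ ℓ s) ≤ n ℓ)
    (B : (∀ ℓ, Fin (n ℓ)) → ℂ)
    (P : ℕ → ∀ ℓ, Matrix (Fin (n ℓ)) ((s : Fin t) × Fin (κ ℓ s)) ℂ)
    (horth : ∀ j ℓ, (P j ℓ)ᴴ * P j ℓ = 1)
    (c : ℝ) (hc : 0 < c)
    (hsa : ∀ j : ℕ,
      c * (Finset.univ.sup' ⟨⟨0, hm⟩, Finset.mem_univ _⟩ fun ℓ : Fin m =>
          traceNorm (scrH B (P j) ℓ) - (Matrix.trace ((P j ℓ)ᴴ * scrH B (P j) ℓ)).re)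
        ≤ fObj B (P (j + 1)) - fObj B (P j))
    :
    ∀ ℓ : Fin m,
      (∀ Proj : ℕ → Matrix (Fin (n ℓ)) (Fin (n ℓ)) ℂ,
        (∀ j, Proj j * Proj j = Proj j ∧ (Proj j)ᴴ = Proj j ∧
          LinearMap.range (Matrix.mulVecLin (Proj j)) =
            Submodule.span ℂ (Set.range (scrH B (P j) ℓ)ᵀ)) →
        Summable (fun j : ℕ => sigmaMin (scrH B (P j) ℓ) *
          (frobNorm (P j ℓ - Proj j * P j ℓ)) ^ 2)) ∧
      Summable (fun j : ℕ => sigmaMin (scrH B (P j) ℓ) *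
        ((frobNorm (scrH B (P j) ℓ - P j ℓ * ((P j ℓ)ᴴ * scrH B (P j) ℓ))) ^ 2 /
          (frobNorm (scrH B (P j) ℓ)) ^ 2)) := by
  intro ℓ
  set K : ℝ := (Fintype.card (∀ ℓ', (s : Fin t) × Fin (κ ℓ' s)) : ℝ) *
      (∑ j : ∀ ℓ', Fin (n ℓ'), ‖B j‖) ^ 2 with hKdef
  have hfle : ∀ j, fObj B (P j) ≤ K := fun j => fObj_le B (P j) (horth j)
  set g : ℕ → ℝ := fun j => traceNorm (scrH B (P j) ℓ) -
      (Matrix.trace ((P j ℓ)ᴴ * scrH B (P j) ℓ)).re with hgdef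
  have hcore := fun j => core (scrH B (P j) ℓ) (P j ℓ) (horth j ℓ)
  have hpart : ∀ J : ℕ, ∑ j ∈ Finset.range J, g j ≤ (K - fObj B (P 0)) / c := by
    intro J
    have h1 : ∀ j, c * g j ≤ fObj B (P (j + 1)) - fObj B (P j) := by
      intro j
      refine le_trans ?_ (hsa j)
      refine mul_le_mul_of_nonneg_left ?_ hc.le
      exact Finset.le_sup' (f := fun ℓ' : Fin m =>
        traceNorm (scrH B (P j) ℓ') - (Matrix.trace ((P j ℓ')ᴴ * scrH B (P j) ℓ')).re)
        (Finset.mem_univ ℓ)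
    have h2 : c * ∑ j ∈ Finset.range J, g j ≤ fObj B (P J) - fObj B (P 0) := by
      rw [Finset.mul_sum]
      calc ∑ j ∈ Finset.range J, c * g j
          ≤ ∑ j ∈ Finset.range J, (fObj B (P (j + 1)) - fObj B (P j)) :=
            Finset.sum_le_sum fun j _ => h1 j
        _ = fObj B (P J) - fObj B (P 0) :=
            Finset.sum_range_sub (fun j => fObj B (P j)) J
    rw [le_div_iff₀ hc]
    have h3 := hfle J
    nlinarith
  have hfinal : ∀ T : ℕ → ℝ, (∀ j, 0 ≤ T j) → (∀ j, T j ≤ 2 * g j) → Summable T := by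
    intro T hT0 hTle
    refine summable_of_sum_range_le (c := 2 * ((K - fObj B (P 0)) / c)) hT0 fun J => ?_
    calc ∑ j ∈ Finset.range J, T j ≤ ∑ j ∈ Finset.range J, 2 * g j :=
          Finset.sum_le_sum fun j _ => hTle j
      _ = 2 * ∑ j ∈ Finset.range J, g j := (Finset.mul_sum _ _ _).symm
      _ ≤ 2 * ((K - fObj B (P 0)) / c) := by
          have := hpart J
          linarith
  constructor
  · intro Proj hProj
    refine hfinal _ (fun j => mul_nonneg (sigmaMin_nonneg _) (sq_nonneg _)) fun j => ?_
    exact (hcore j).2.1 (Proj j) (hProj j).1 (hProj j).2.1 (hProj j).2.2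
  · refine hfinal _ (fun j => mul_nonneg (sigmaMin_nonneg _)
      (div_nonneg (sq_nonneg _) (sq_nonneg _))) fun j => ?_
    exact (hcore j).2.2
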